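/- Fix γ > 0 and a₁, a₂, a₃ ∈ ℝ with (a₁, a₂) ≠ (0, 0). For each integer n > 2 set r(n) = √(2γ/n), R(n) = (1/2) r(n)(a₁² + a₂² − r(n)² a₃²)^{1/2}, and α_n = cosh R(n) − i r(n)² a₃ · sinh R(n)/(2 R(n)). Then lim_{n→∞} n(α_n − 1) = (γ/4)(a₁² + a₂²) − i γ a₃. -/

import Mathlib

open Filter

theorem sinh_div_self_tendsto : Tendsto (fun x : ℝ => Real.sinh x / x) (nhdsWithin 0 {(0:ℝ)}ᶜ) (nhds 1) := by
  have h := Real.hasDerivAt_sinh 0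
  rw [hasDerivAt_iff_tendsto_slope] at h
  have : (slope Real.sinh 0) = fun x : ℝ => Real.sinh x / x := by
    funext x
    simp [slope_def_field, Real.sinh_zero]
  rw [this, Real.cosh_zero] at h
  exact h

/-- Key asymptotic in the contraction of the holomorphic discrete series of `SU(1,1)`
to the Bargmann–Fock representation of the Heisenberg group: with `r(n) = √(2γ/n)`,
`R(n) = (1/2) r(n) √(a₁² + a₂² − r(n)² a₃²)` and
`α_n = cosh R(n) − i r(n)² a₃ sinh R(n)/(2R(n))`, one has
`lim_n n(α_n − 1) = (γ/4)(a₁² + a₂²) − iγa₃`. -/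
theorem su11_contraction_alpha_asymptotic (γ a₁ a₂ a₃ : ℝ) (hγ : 0 < γ)
    (ha : (a₁, a₂) ≠ (0, 0))
    (r R : ℕ → ℝ) (α : ℕ → ℂ)
    (hr : ∀ n : ℕ, r n = Real.sqrt (2 * γ / n))
    (hR : ∀ n : ℕ, R n = (1 / 2) * r n * Real.sqrt (a₁ ^ 2 + a₂ ^ 2 - (r n) ^ 2 * a₃ ^ 2))
    (hα : ∀ n : ℕ, α n = ((Real.cosh (R n) : ℝ) : ℂ)
      - Complex.I * ((r n : ℝ) : ℂ) ^ 2 * (a₃ : ℂ)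
        * ((Real.sinh (R n) / (2 * R n) : ℝ) : ℂ)) :
    Tendsto (fun n : ℕ => (n : ℂ) * (α n - 1)) atTop
      (nhds ((((γ : ℂ)) / 4) * ((a₁ : ℂ) ^ 2 + (a₂ : ℂ) ^ 2)
        - Complex.I * (γ : ℂ) * (a₃ : ℂ))) := by
  set s : ℝ := a₁ ^ 2 + a₂ ^ 2 with hs_def
  have hs : 0 < s := by
    have h' : a₁ ≠ 0 ∨ a₂ ≠ 0 := by
      by_contra h
      push_neg at h
      exact ha (by simp [h.1, h.2])
    rcases h' with h' | h' <;> positivity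
  set q : ℕ → ℝ := fun n => 2 * γ / n with hq_def
  have hq0 : ∀ n, 0 ≤ q n := fun n => by positivity
  have hq : Tendsto q atTop (nhds 0) := tendsto_const_div_atTop_nhds_zero_nat (2 * γ)
  have hrsq : ∀ n, r n ^ 2 = q n := fun n => by rw [hr]; exact Real.sq_sqrt (hq0 n)
  have hReq : ∀ n, R n = (1 / 2) * Real.sqrt (q n) * Real.sqrt (s - q n * a₃ ^ 2) := by
    intro n; rw [hR n, hrsq n, hr n]
  -- R tends to 0
  have h1 : Tendsto (fun n => Real.sqrt (q n)) atTop (nhds 0) := by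
    have := (Real.continuous_sqrt.tendsto 0).comp hq
    simpa [Function.comp_def] using this
  have h2 : Tendsto (fun n => Real.sqrt (s - q n * a₃ ^ 2)) atTop (nhds (Real.sqrt s)) := by
    have hin : Tendsto (fun n => s - q n * a₃ ^ 2) atTop (nhds s) := by
      have := (hq.mul_const (a₃ ^ 2)).const_sub s
      simpa using this
    exact (Real.continuous_sqrt.tendsto s).comp hin
  have hR0 : Tendsto R atTop (nhds 0) := by
    have := (h1.const_mul ((1:ℝ)/2)).mul h2
    simp only [mul_zero, zero_mul] at this
    exact Tendsto.congr (fun n => (hReq n).symm) this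
  -- eventual facts
  have hev : ∀ᶠ n : ℕ in atTop, 1 ≤ n ∧ q n * a₃ ^ 2 < s := by
    have hlt : ∀ᶠ n : ℕ in atTop, q n * a₃ ^ 2 < s := by
      have := hq.mul_const (a₃ ^ 2)
      rw [zero_mul] at this
      exact this.eventually_lt_const hs
    filter_upwards [eventually_ge_atTop 1, hlt] with n h1 h2 using ⟨h1, h2⟩
  have hRpos : ∀ n : ℕ, 1 ≤ n → q n * a₃ ^ 2 < s → 0 < R n := by
    intro n hn hlt
    rw [hReq]
    have hnp : (0:ℝ) < n := by exact_mod_cast hn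
    have hq' : 0 < q n := by positivity
    have : 0 < s - q n * a₃ ^ 2 := by linarith
    positivity
  have hRne : ∀ᶠ n : ℕ in atTop, R n ≠ 0 := by
    filter_upwards [hev] with n ⟨h1, h2⟩ using (hRpos n h1 h2).ne'
  have hRnhds : Tendsto R atTop (nhdsWithin 0 {(0:ℝ)}ᶜ) :=
    tendsto_nhdsWithin_of_tendsto_nhds_of_eventually_within R hR0
      (by filter_upwards [hRne] with n h using h)
  have hRhalf : Tendsto (fun n => R n / 2) atTop (nhdsWithin 0 {(0:ℝ)}ᶜ) := by
    refine tendsto_nhdsWithin_of_tendsto_nhds_of_eventually_within _ (by simpa using hR0.div_const 2) ?_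
    filter_upwards [hRne] with n h
    simp [div_eq_zero_iff, h]
  have hsinh1 : Tendsto (fun n => Real.sinh (R n) / R n) atTop (nhds 1) :=
    sinh_div_self_tendsto.comp hRnhds
  have hsinh2 : Tendsto (fun n => Real.sinh (R n / 2) / (R n / 2)) atTop (nhds 1) :=
    sinh_div_self_tendsto.comp hRhalf
  -- n * R n ^ 2 → γ/2 * s
  have hnR2 : Tendsto (fun n : ℕ => (n : ℝ) * R n ^ 2) atTop (nhds (γ / 2 * s)) := by
    have hlim : Tendsto (fun n : ℕ => γ / 2 * (s - q n * a₃ ^ 2)) atTop (nhds (γ / 2 * s)) := by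
      have hin : Tendsto (fun n => s - q n * a₃ ^ 2) atTop (nhds s) := by
        have := (hq.mul_const (a₃ ^ 2)).const_sub s
        simpa using this
      simpa using hin.const_mul (γ / 2)
    refine hlim.congr' ?_
    filter_upwards [hev] with n ⟨h1, h2⟩
    have hnp : (0:ℝ) < n := by exact_mod_cast h1
    have hin : 0 ≤ s - q n * a₃ ^ 2 := by linarith
    have : R n ^ 2 = (1 / 4) * q n * (s - q n * a₃ ^ 2) := by
      rw [hReq]
      rw [mul_pow, mul_pow, Real.sq_sqrt (hq0 n), Real.sq_sqrt hin]
      ring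
    rw [this, hq_def]
    field_simp
    ring
  -- real part limit
  have hf : Tendsto (fun n : ℕ => (n : ℝ) * (Real.cosh (R n) - 1)) atTop (nhds (γ * s / 4)) := by
    have hlim : Tendsto (fun n : ℕ => 2 * (Real.sinh (R n / 2) / (R n / 2)) ^ 2 *
        ((n : ℝ) * R n ^ 2 / 4)) atTop (nhds (2 * 1 ^ 2 * (γ / 2 * s / 4))) := by
      exact ((hsinh2.pow 2).const_mul 2).mul (hnR2.div_const 4)
    have : (2 : ℝ) * 1 ^ 2 * (γ / 2 * s / 4) = γ * s / 4 := by ring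
    rw [this] at hlim
    refine hlim.congr' ?_
    filter_upwards [hRne] with n hn
    have hcosh : Real.cosh (R n) = 1 + 2 * Real.sinh (R n / 2) ^ 2 := by
      have h2m := Real.cosh_two_mul (R n / 2)
      have h2 : 2 * (R n / 2) = R n := by ring
      rw [h2] at h2m
      rw [h2m, Real.cosh_sq]
      ring
    rw [hcosh]
    have hhne : R n / 2 ≠ 0 := by simp [div_eq_zero_iff, hn]
    field_simp
    ring
  -- imaginary part limit
  have hg : Tendsto (fun n : ℕ => γ * a₃ * (Real.sinh (R n) / R n)) atTop (nhds (γ * a₃)) := by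
    have := hsinh1.const_mul (γ * a₃)
    simpa using this
  -- combine in ℂ
  have hmain : Tendsto (fun n : ℕ =>
      (((n : ℝ) * (Real.cosh (R n) - 1) : ℝ) : ℂ)
        - Complex.I * ((γ * a₃ * (Real.sinh (R n) / R n) : ℝ) : ℂ)) atTop
      (nhds (((γ * s / 4 : ℝ) : ℂ) - Complex.I * ((γ * a₃ : ℝ) : ℂ))) := by
    exact ((Complex.continuous_ofReal.tendsto _).comp hf).sub
      (((Complex.continuous_ofReal.tendsto _).comp hg).const_mul Complex.I)
  have htarget : (((γ : ℂ)) / 4) * ((a₁ : ℂ) ^ 2 + (a₂ : ℂ) ^ 2)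
      - Complex.I * (γ : ℂ) * (a₃ : ℂ)
      = ((γ * s / 4 : ℝ) : ℂ) - Complex.I * ((γ * a₃ : ℝ) : ℂ) := by
    rw [hs_def]; push_cast; ring
  rw [htarget]
  refine hmain.congr' ?_
  filter_upwards [hev] with n ⟨h1, h2⟩
  have hnp : (0:ℝ) < n := by exact_mod_cast h1
  have hRn : R n ≠ 0 := (hRpos n h1 h2).ne'
  have hr2 : (r n : ℝ) ^ 2 = 2 * γ / n := hrsq n
  have key : (n : ℝ) * ((r n) ^ 2 * a₃ * (Real.sinh (R n) / (2 * R n)))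
      = γ * a₃ * (Real.sinh (R n) / R n) := by
    rw [hr2]
    field_simp
  rw [hα, ← key]
  push_cast
  ring
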